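/- Fix B₁ > 0, B₂ > 0, r₀ > 0 and h > 0. For z = (x, y) and z' = (x', y') with x, x' ∈ ℝ^d, ‖x‖ ≤ B₁, ‖x'‖ ≤ B₁, |y| ≤ B₂, |y'| ≤ B₂, define the minimum error entropy (MEE) loss ℓ(w, z, z') = 1 − exp(−((y − y') − ⟨x − x', w⟩)² / (2h²)) for w ∈ ℝ^d. Let L = (4/h²)·(B₁²·r₀ + B₁·B₂) and β = (4/h²)·B₁² + (16/h⁴)·(B₁²·r₀ + B₁·B₂)². Then, on the closed ball Ω = {w ∈ ℝ^d : ‖w‖ ≤ r₀}: (i) ℓ(·, z, z') takes values in [0, 1); (ii) w ↦ ℓ(w, z, z') is L-Lipschitz on Ω; and (iii) w ↦ ℓ(w, z, z') is differentiable and its gradient is β-Lipschitz on Ω. -/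

import Mathlib

set_option maxHeartbeats 1000000


open scoped RealInnerProductSpace

/-- **Corollary 23 (MEE loss properties).** On the ball `Ω = {w : ‖w‖ ≤ r₀}`, the minimum error
entropy loss `ℓ(w) = 1 − exp(−((y − y') − ⟪x − x', w⟫)²/(2h²))` takes values in `[0, 1)`, is
`L`-Lipschitz with `L = (4/h²)(B₁²r₀ + B₁B₂)`, and is differentiable with `β`-Lipschitz
gradient on `Ω`, where `β = (4/h²)B₁² + (16/h⁴)(B₁²r₀ + B₁B₂)²`. -/
theorem mee_loss_properties
    {d : ℕ} (B₁ B₂ r₀ h : ℝ) (hB₁ : 0 < B₁) (hB₂ : 0 < B₂) (hr₀ : 0 < r₀) (hh : 0 < h)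
    (x x' : EuclideanSpace ℝ (Fin d)) (y y' : ℝ)
    (hx : ‖x‖ ≤ B₁) (hx' : ‖x'‖ ≤ B₁) (hy : |y| ≤ B₂) (hy' : |y'| ≤ B₂)
    (ℓ : EuclideanSpace ℝ (Fin d) → ℝ)
    (hℓ : ∀ w, ℓ w = 1 - Real.exp (-((y - y') - ⟪x - x', w⟫) ^ 2 / (2 * h ^ 2))) :
    (∀ w ∈ Metric.closedBall (0 : EuclideanSpace ℝ (Fin d)) r₀,
      ℓ w ∈ Set.Ico (0 : ℝ) 1) ∧
      (∀ w ∈ Metric.closedBall (0 : EuclideanSpace ℝ (Fin d)) r₀,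
        ∀ v ∈ Metric.closedBall (0 : EuclideanSpace ℝ (Fin d)) r₀,
          |ℓ w - ℓ v| ≤ (4 / h ^ 2 * (B₁ ^ 2 * r₀ + B₁ * B₂)) * ‖w - v‖) ∧
      ∃ g : EuclideanSpace ℝ (Fin d) → EuclideanSpace ℝ (Fin d),
        (∀ w, HasGradientAt ℓ (g w) w) ∧
          ∀ w ∈ Metric.closedBall (0 : EuclideanSpace ℝ (Fin d)) r₀,
            ∀ v ∈ Metric.closedBall (0 : EuclideanSpace ℝ (Fin d)) r₀,
              ‖g w - g v‖ ≤
                (4 / h ^ 2 * B₁ ^ 2 + 16 / h ^ 4 * (B₁ ^ 2 * r₀ + B₁ * B₂) ^ 2) * ‖w - v‖ := by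
  have hℓ' : ℓ = fun w => 1 - Real.exp (-((y - y') - ⟪x - x', w⟫) ^ 2 / (2 * h ^ 2)) :=
    funext hℓ
  subst hℓ'
  set u : EuclideanSpace ℝ (Fin d) := x - x' with hu_def
  set a : ℝ := y - y' with ha_def
  have hh2 : (0:ℝ) < h ^ 2 := by positivity
  have hh4 : (0:ℝ) < h ^ 4 := by positivity
  have hu : ‖u‖ ≤ 2 * B₁ := (norm_sub_le x x').trans (by linarith)
  have ha : |a| ≤ 2 * B₂ := (abs_sub y y').trans (by linarith)
  set T : ℝ := 2 * B₂ + 2 * B₁ * r₀ with hT_def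
  have hT0 : 0 < T := by positivity
  set t : EuclideanSpace ℝ (Fin d) → ℝ := fun w => a - ⟪u, w⟫ with ht_def
  have htb : ∀ w ∈ Metric.closedBall (0 : EuclideanSpace ℝ (Fin d)) r₀, |t w| ≤ T := by
    intro w hw
    rw [Metric.mem_closedBall, dist_zero_right] at hw
    have h1 : |⟪u, w⟫| ≤ ‖u‖ * ‖w‖ := abs_real_inner_le_norm u w
    have h2 : ‖u‖ * ‖w‖ ≤ 2 * B₁ * r₀ := by nlinarith [norm_nonneg w, norm_nonneg u]
    calc |t w| ≤ |a| + |⟪u, w⟫| := abs_sub _ _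
      _ ≤ T := by rw [hT_def]; linarith
  have htd : ∀ w v : EuclideanSpace ℝ (Fin d), |t w - t v| ≤ 2 * B₁ * ‖w - v‖ := by
    intro w v
    have h1 : t w - t v = -⟪u, w - v⟫ := by
      simp only [ht_def, inner_sub_right]; ring
    rw [h1, abs_neg]
    calc |⟪u, w - v⟫| ≤ ‖u‖ * ‖w - v‖ := abs_real_inner_le_norm _ _
      _ ≤ 2 * B₁ * ‖w - v‖ := by nlinarith [norm_nonneg (w - v), norm_nonneg u]
  have hexp_le_one : ∀ s : ℝ, Real.exp (-s ^ 2 / (2 * h ^ 2)) ≤ 1 := by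
    intro s
    apply Real.exp_le_one_iff.2
    apply div_nonpos_of_nonpos_of_nonneg (neg_nonpos.2 (sq_nonneg s)) (by positivity)
  have hder1 : ∀ s : ℝ, HasDerivAt (fun s : ℝ => -s ^ 2 / (2 * h ^ 2))
      (-(2 * s) / (2 * h ^ 2)) s := by
    intro s
    simpa using ((hasDerivAt_pow 2 s).neg).div_const (2 * h ^ 2)
  have hF : ∀ s : ℝ, HasDerivAt (fun s : ℝ => 1 - Real.exp (-s ^ 2 / (2 * h ^ 2)))
      (s / h ^ 2 * Real.exp (-s ^ 2 / (2 * h ^ 2))) s := by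
    intro s
    have h2 := (Real.hasDerivAt_exp (-s ^ 2 / (2 * h ^ 2))).comp s (hder1 s)
    have h3 := (hasDerivAt_const s (1:ℝ)).sub h2
    exact h3.congr_deriv (by field_simp; ring)
  have hT' : ∀ w : EuclideanSpace ℝ (Fin d), HasFDerivAt t (-(innerSL ℝ u)) w := by
    intro w
    have := ((hasFDerivAt_const a w).sub (innerSL ℝ u).hasFDerivAt)
    simp at this
    exact this
  set ψ : ℝ → ℝ := fun s => -(s / h ^ 2 * Real.exp (-s ^ 2 / (2 * h ^ 2))) with hψ_def
  set g : EuclideanSpace ℝ (Fin d) → EuclideanSpace ℝ (Fin d) :=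
    fun w => ψ (t w) • u with hg_def
  have hgrad : ∀ w : EuclideanSpace ℝ (Fin d), HasGradientAt (fun w => 1 -
      Real.exp (-(a - ⟪u, w⟫) ^ 2 / (2 * h ^ 2))) (g w) w := by
    intro w
    have hc := (hF (t w)).comp_hasFDerivAt w (hT' w)
    have heq : InnerProductSpace.toDual ℝ (EuclideanSpace ℝ (Fin d)) (g w) =
        (t w / h ^ 2 * Real.exp (-t w ^ 2 / (2 * h ^ 2))) • (-(innerSL ℝ u)) := by
      ext v
      simp [hg_def, InnerProductSpace.toDual_apply_apply, real_inner_smul_left, hψ_def]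
    rw [hasGradientAt_iff_hasFDerivAt, heq]
    exact hc
  -- bound the absolute value of ψ on the relevant range
  have hψabs : ∀ s : ℝ, |s| ≤ T → |ψ s| ≤ T / h ^ 2 := by
    intro s hs
    have heq : |ψ s| = |s| / h ^ 2 * Real.exp (-s ^ 2 / (2 * h ^ 2)) := by
      rw [hψ_def]
      simp only [abs_neg, abs_mul, abs_div, abs_of_pos hh2,
        abs_of_pos (Real.exp_pos _)]
    rw [heq]
    have h1 := hexp_le_one s
    have h2 := Real.exp_pos (-s ^ 2 / (2 * h ^ 2))
    have h3 : (0:ℝ) ≤ |s| / h ^ 2 := by positivity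
    have h4 : |s| / h ^ 2 ≤ T / h ^ 2 := by gcongr
    nlinarith
  have hgnorm : ∀ w ∈ Metric.closedBall (0 : EuclideanSpace ℝ (Fin d)) r₀,
      ‖InnerProductSpace.toDual ℝ (EuclideanSpace ℝ (Fin d)) (g w)‖ ≤
        4 / h ^ 2 * (B₁ ^ 2 * r₀ + B₁ * B₂) := by
    intro w hw
    rw [LinearIsometryEquiv.norm_map]
    have h1 : ‖g w‖ = |ψ (t w)| * ‖u‖ := by
      rw [hg_def]; simp [norm_smul]
    have h2 := hψabs (t w) (htb w hw)
    have key : T / h ^ 2 * (2 * B₁) = 4 / h ^ 2 * (B₁ ^ 2 * r₀ + B₁ * B₂) := by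
      rw [hT_def]; field_simp; ring
    rw [h1, ← key]
    have h3 : 0 ≤ T / h ^ 2 := by positivity
    nlinarith [abs_nonneg (ψ (t w)), norm_nonneg u]
  refine ⟨?_, ?_, g, hgrad, ?_⟩
  · rintro w -
    refine ⟨?_, ?_⟩
    · have := hexp_le_one (a - ⟪u, w⟫)
      show 0 ≤ 1 - Real.exp (-(a - ⟪u, w⟫) ^ 2 / (2 * h ^ 2))
      linarith
    · have := Real.exp_pos (-(a - ⟪u, w⟫) ^ 2 / (2 * h ^ 2))
      show 1 - Real.exp (-(a - ⟪u, w⟫) ^ 2 / (2 * h ^ 2)) < 1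
      linarith
  · intro w hw v hv
    have := Convex.norm_image_sub_le_of_norm_hasFDerivWithin_le
      (f := fun w => 1 - Real.exp (-(a - ⟪u, w⟫) ^ 2 / (2 * h ^ 2)))
      (f' := fun w => InnerProductSpace.toDual ℝ (EuclideanSpace ℝ (Fin d)) (g w))
      (fun z hz => ((hgrad z).hasFDerivAt).hasFDerivWithinAt)
      hgnorm (convex_closedBall _ _) hv hw
    simpa [Real.norm_eq_abs] using this
  · -- gradient Lipschitz
    have hψ' : ∀ s : ℝ, HasDerivAt ψ
        (Real.exp (-s ^ 2 / (2 * h ^ 2)) * (s ^ 2 / h ^ 4 - 1 / h ^ 2)) s := by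
      intro s
      have h2 := (Real.hasDerivAt_exp (-s ^ 2 / (2 * h ^ 2))).comp s (hder1 s)
      have h3 : HasDerivAt (fun s : ℝ => s / h ^ 2) (1 / h ^ 2) s := by
        simpa using (hasDerivAt_id s).div_const (h ^ 2)
      have h4 := (h3.mul h2).neg
      exact h4.congr_deriv (by rw [Function.comp_apply]; field_simp; ring)
    set K : ℝ := 1 / h ^ 2 + T ^ 2 / h ^ 4 with hK_def
    have hK0 : 0 ≤ K := by positivity
    have hψlip : ∀ s ∈ Metric.closedBall (0:ℝ) T, ∀ s' ∈ Metric.closedBall (0:ℝ) T,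
        |ψ s - ψ s'| ≤ K * |s - s'| := by
      intro s hs s' hs'
      have hb : ∀ z ∈ Metric.closedBall (0:ℝ) T,
          ‖Real.exp (-z ^ 2 / (2 * h ^ 2)) * (z ^ 2 / h ^ 4 - 1 / h ^ 2)‖ ≤ K := by
        intro z hz
        rw [Metric.mem_closedBall, dist_zero_right, Real.norm_eq_abs] at hz
        rw [Real.norm_eq_abs, abs_mul, abs_of_pos (Real.exp_pos _)]
        have h1 := hexp_le_one z
        have h2 : |z ^ 2 / h ^ 4 - 1 / h ^ 2| ≤ K := by
          rw [hK_def]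
          have h3 : z ^ 2 ≤ T ^ 2 := by nlinarith [abs_nonneg z, sq_abs z]
          rw [abs_sub_le_iff]
          constructor
          · have : z ^ 2 / h ^ 4 ≤ T ^ 2 / h ^ 4 := by gcongr
            have h5 : 0 < 1 / h ^ 2 := by positivity
            linarith
          · have h6 : 0 ≤ z ^ 2 / h ^ 4 := by positivity
            have h7 : 0 ≤ T ^ 2 / h ^ 4 := by positivity
            linarith
        have h8 := Real.exp_pos (-z ^ 2 / (2 * h ^ 2))
        nlinarith [abs_nonneg (z ^ 2 / h ^ 4 - 1 / h ^ 2)]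
      have := Convex.norm_image_sub_le_of_norm_hasDerivWithin_le
        (f := ψ) (f' := fun s => Real.exp (-s ^ 2 / (2 * h ^ 2)) * (s ^ 2 / h ^ 4 - 1 / h ^ 2))
        (fun z _ => (hψ' z).hasDerivWithinAt) hb (convex_closedBall _ _) hs' hs
      simpa [Real.norm_eq_abs] using this
    intro w hw v hv
    have htwT : t w ∈ Metric.closedBall (0:ℝ) T := by
      rw [Metric.mem_closedBall, dist_zero_right, Real.norm_eq_abs]; exact htb w hw
    have htvT : t v ∈ Metric.closedBall (0:ℝ) T := by
      rw [Metric.mem_closedBall, dist_zero_right, Real.norm_eq_abs]; exact htb v hv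
    have h1 : ‖g w - g v‖ = |ψ (t w) - ψ (t v)| * ‖u‖ := by
      rw [hg_def]
      simp only [← sub_smul, norm_smul, Real.norm_eq_abs]
    have h2 := hψlip (t w) htwT (t v) htvT
    have h3 := htd w v
    have key : K * (2 * B₁) * (2 * B₁) =
        4 / h ^ 2 * B₁ ^ 2 + 16 / h ^ 4 * (B₁ ^ 2 * r₀ + B₁ * B₂) ^ 2 := by
      rw [hK_def, hT_def]; field_simp; ring
    rw [h1, ← key]
    nlinarith [abs_nonneg (ψ (t w) - ψ (t v)), abs_nonneg (t w - t v),
      norm_nonneg u, norm_nonneg (w - v), mul_le_mul_of_nonneg_right h2 (norm_nonneg u),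
      mul_le_mul_of_nonneg_left h3 hK0, mul_le_mul_of_nonneg_right hu
        (mul_nonneg hK0 (abs_nonneg (t w - t v)))]
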